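/- Let t be a real number with 0 < t ≤ 1 and let m be a natural number. Then Σ_{k=0}^{m} max(1, 2^k · t) ≤ log₂(1/t) + 1 + 2^{m+1} · t. -/
import Mathlib


/-- **Character-queue cost sum** (arithmetic core of Lemma 10 of the paper).
For `0 < t ≤ 1` and any `m`, `∑_{k=0}^m max(1, 2^k t) ≤ log₂(1/t) + 1 + 2^(m+1) t`. -/
theorem character_queue_cost_sum (t : ℝ) (ht0 : 0 < t) (ht1 : t ≤ 1) (m : ℕ) :
    ∑ k ∈ Finset.range (m + 1), max 1 ((2 : ℝ) ^ k * t) ≤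
      Real.logb 2 (1 / t) + 1 + 2 ^ (m + 1) * t := by
  have h1t : (1:ℝ) ≤ 1 / t := by
    rw [le_div_iff₀ ht0]; linarith
  have hlog0 : 0 ≤ Real.logb 2 (1 / t) := Real.logb_nonneg one_lt_two h1t
  have key : ∀ k ∈ Finset.range (m + 1), max 1 ((2:ℝ) ^ k * t) ≤
      (if (2:ℝ) ^ k * t ≤ 1 then (1:ℝ) else 0) + 2 ^ k * t := by
    intro k _
    have hx : (0:ℝ) ≤ 2 ^ k * t := by positivity
    by_cases h : (2:ℝ) ^ k * t ≤ 1
    · simp only [if_pos h]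
      have : max 1 ((2:ℝ) ^ k * t) = 1 := max_eq_left h
      linarith [this]
    · push_neg at h
      simp only [if_neg (not_le.mpr h)]
      have : max 1 ((2:ℝ) ^ k * t) = 2 ^ k * t := max_eq_right h.le
      linarith [this]
  have hcount : (∑ k ∈ Finset.range (m + 1),
      (if (2:ℝ) ^ k * t ≤ 1 then (1:ℝ) else 0)) ≤ Real.logb 2 (1 / t) + 1 := by
    rw [Finset.sum_boole]
    have hsub : (Finset.range (m + 1)).filter (fun k => (2:ℝ) ^ k * t ≤ 1) ⊆
        Finset.range (⌊Real.logb 2 (1 / t)⌋₊ + 1) := by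
      intro k hk
      simp only [Finset.mem_filter] at hk
      have h2k : (2:ℝ) ^ k ≤ 1 / t := by
        rw [le_div_iff₀ ht0]; exact hk.2
      have hk' : (k : ℝ) ≤ Real.logb 2 (1 / t) := by
        have := Real.logb_le_logb_of_le one_lt_two (by positivity : (0:ℝ) < 2 ^ k) h2k
        rwa [Real.logb_pow, Real.logb_self_eq_one one_lt_two, mul_one] at this
      simp only [Finset.mem_range, Nat.lt_succ_iff]
      exact Nat.le_floor hk'
    have hcard := Finset.card_le_card hsub
    simp only [Finset.card_range] at hcard
    calc ((((Finset.range (m + 1)).filter (fun k => (2:ℝ) ^ k * t ≤ 1)).card : ℝ))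
        ≤ ((⌊Real.logb 2 (1 / t)⌋₊ + 1 : ℕ) : ℝ) := by exact_mod_cast hcard
      _ ≤ Real.logb 2 (1 / t) + 1 := by
          push_cast
          linarith [Nat.floor_le hlog0]
  have hgeo : (∑ k ∈ Finset.range (m + 1), (2:ℝ) ^ k * t) ≤ 2 ^ (m + 1) * t := by
    rw [← Finset.sum_mul]
    have hsum : (∑ k ∈ Finset.range (m + 1), (2:ℝ) ^ k) = 2 ^ (m + 1) - 1 := by
      rw [geom_sum_eq (by norm_num : (2:ℝ) ≠ 1)]; ring
    rw [hsum]
    nlinarith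
  calc ∑ k ∈ Finset.range (m + 1), max 1 ((2:ℝ) ^ k * t)
      ≤ ∑ k ∈ Finset.range (m + 1),
          ((if (2:ℝ) ^ k * t ≤ 1 then (1:ℝ) else 0) + 2 ^ k * t) :=
        Finset.sum_le_sum key
    _ = (∑ k ∈ Finset.range (m + 1), (if (2:ℝ) ^ k * t ≤ 1 then (1:ℝ) else 0)) +
        ∑ k ∈ Finset.range (m + 1), (2:ℝ) ^ k * t := Finset.sum_add_distrib
    _ ≤ (Real.logb 2 (1 / t) + 1) + 2 ^ (m + 1) * t := add_le_add hcount hgeo
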